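/- For every integer k ≥ 0 the range of K₋ₖ equals the range of K₋ₖ ∘ W. In particular, the range of K₀ equals the range of P = K₀ ∘ W. -/

import Mathlib

open Complex MeasureTheory

/-- The `j`-th Laurent coefficient `K_j = (2πi)⁻¹ ∮_{|v|=r} v^(-j) R(v) dv` of the
resolvent function `R`. -/
noncomputable def laurentK {H : Type*} [NormedAddCommGroup H] [NormedSpace ℂ H]
    (R : ℂ → (H →L[ℂ] H)) (r : ℝ) (j : ℤ) : H →L[ℂ] H :=
  (2 * (Real.pi : ℂ) * Complex.I)⁻¹ • ∮ v in C(0, r), v ^ (-j) • R v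

/-- A continuous linear map commutes with a circle integral of an integrable function. -/
lemma clm_circleIntegral_comm {E F : Type*} [NormedAddCommGroup E] [NormedSpace ℂ E]
    [CompleteSpace E] [NormedAddCommGroup F] [NormedSpace ℂ F] [CompleteSpace F]
    (L : E →L[ℂ] F) {f : ℂ → E} {c : ℂ} {ρ : ℝ} (hf : CircleIntegrable f c ρ) :
    (∮ z in C(c, ρ), L (f z)) = L (∮ z in C(c, ρ), f z) := by
  simp only [circleIntegral]
  rw [← L.intervalIntegral_comp_comm hf.out]
  exact intervalIntegral.integral_congr fun θ _ => (L.map_smul _ _).symm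

theorem range_laurentK_eq_range_laurentK_comp_perturbation
    {H : Type*} [NormedAddCommGroup H] [InnerProductSpace ℂ H] [CompleteSpace H]
    (N₀ W : H →L[ℂ] H) (z₀ : ℂ) (r : ℝ) (hr : 0 < r)
    (R : ℂ → (H →L[ℂ] H))
    (hR : ∀ v : ℂ, v ≠ 0 → ‖v‖ ≤ r →
      (N₀ + v • W - z₀ • (1 : H →L[ℂ] H)) * R v = 1 ∧
      R v * (N₀ + v • W - z₀ • (1 : H →L[ℂ] H)) = 1) :
    (∀ k : ℤ, 0 ≤ k →
      Set.range ⇑(laurentK R r (-k)) = Set.range ⇑(laurentK R r (-k) * W)) ∧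
    Set.range ⇑(laurentK R r 0) = Set.range ⇑(laurentK R r 0 * W) := by
  set T : ℂ → (H →L[ℂ] H) := fun v => N₀ + v • W - z₀ • 1 with hT
  set c : ℂ := (2 * (Real.pi : ℂ) * Complex.I)⁻¹ with hc
  have hπ : (2 * (Real.pi : ℂ) * Complex.I) ≠ 0 := by
    simp [Real.pi_ne_zero, Complex.I_ne_zero, Complex.ofReal_ne_zero]
  have hUnit : ∀ v : ℂ, v ≠ 0 → ‖v‖ ≤ r → IsUnit (T v) := fun v h1 h2 =>
    ⟨⟨T v, R v, (hR v h1 h2).1, (hR v h1 h2).2⟩, rfl⟩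
  have hReq : ∀ v : ℂ, v ≠ 0 → ‖v‖ ≤ r → Ring.inverse (T v) = R v := fun v h1 h2 =>
    Ring.inverse_unit ⟨T v, R v, (hR v h1 h2).1, (hR v h1 h2).2⟩
  have hT_diff : ∀ v : ℂ, DifferentiableAt ℂ T v := by
    intro v
    apply DifferentiableAt.sub _ (differentiableAt_const _)
    exact (differentiableAt_const _).add (differentiableAt_id.smul_const W)
  have hInv_diff : ∀ v : ℂ, v ≠ 0 → ‖v‖ ≤ r →
      DifferentiableAt ℂ (fun w => Ring.inverse (T w)) v := fun v h1 h2 =>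
    (hT_diff v).inverse (hUnit v h1 h2)
  have hRcont : ∀ ρ : ℝ, 0 < ρ → ρ ≤ r → ContinuousOn R (Metric.sphere (0:ℂ) ρ) := by
    intro ρ hρ hρr
    have hcont : ContinuousOn (fun w => Ring.inverse (T w)) (Metric.sphere (0:ℂ) ρ) := by
      intro v hv
      have hvn : ‖v‖ = ρ := by simpa [mem_sphere_iff_norm] using hv
      have h1 : v ≠ 0 := by rintro rfl; rw [norm_zero] at hvn; exact (ne_of_gt hρ) hvn.symm
      exact ((hInv_diff v h1 (by rw [hvn]; exact hρr)).continuousAt).continuousWithinAt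
    refine hcont.congr fun v hv => ?_
    have hvn : ‖v‖ = ρ := by simpa [mem_sphere_iff_norm] using hv
    have h1 : v ≠ 0 := by rintro rfl; rw [norm_zero] at hvn; exact (ne_of_gt hρ) hvn.symm
    exact (hReq v h1 (by rw [hvn]; exact hρr)).symm
  have hRint : CircleIntegrable R 0 r := (hRcont r hr le_rfl).circleIntegrable hr.le
  -- the key algebraic identity: K₋ₖ * W * K₀ = K₋ₖ for k ≥ 0
  have key : ∀ k : ℤ, 0 ≤ k →
      laurentK R r (-k) * W * laurentK R r 0 = laurentK R r (-k) := by
    intro k hk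
    obtain ⟨n, rfl⟩ : ∃ n : ℕ, (n : ℤ) = k := ⟨k.toNat, Int.toNat_of_nonneg hk⟩
    set ρ : ℝ := r / 2 with hρdef
    have hρ : 0 < ρ := by positivity
    have hρr : ρ < r := by rw [hρdef]; linarith
    set F : ℂ → (H →L[ℂ] H) := fun v => v ^ n • R v with hF
    have hFinv_diff : ∀ v : ℂ, v ≠ 0 → ‖v‖ ≤ r →
        DifferentiableAt ℂ (fun w => w ^ n • Ring.inverse (T w)) v := fun v h1 h2 =>
      (differentiableAt_pow n).smul (hInv_diff v h1 h2)
    have hFeq : ∀ v : ℂ, v ≠ 0 → ‖v‖ ≤ r → F v = v ^ n • Ring.inverse (T v) := by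
      intro v h1 h2; rw [hReq v h1 h2]
    have hFcont : ∀ s : Set ℂ, (∀ v ∈ s, v ≠ 0 ∧ ‖v‖ ≤ r) → ContinuousOn F s := by
      intro s hs
      have hcont : ContinuousOn (fun w => w ^ n • Ring.inverse (T w)) s := fun v hv =>
        ((hFinv_diff v (hs v hv).1 (hs v hv).2).continuousAt).continuousWithinAt
      exact hcont.congr fun v hv => hFeq v (hs v hv).1 (hs v hv).2
    -- change of radius for the outer integral
    have hradius : (∮ v in C(0, r), F v) = ∮ v in C(0, ρ), F v := by
      apply circleIntegral_eq_of_differentiable_on_annulus_off_countable hρ hρr.le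
        Set.countable_empty
      · apply hFcont
        intro v hv
        simp only [Set.mem_diff, Metric.mem_closedBall, Metric.mem_ball, dist_zero_right,
          not_lt] at hv
        refine ⟨?_, hv.1⟩
        rintro rfl; rw [norm_zero] at hv; linarith [hv.2]
      · intro z hz
        simp only [Set.mem_diff, Metric.mem_ball, Metric.mem_closedBall, dist_zero_right,
          not_le, Set.mem_empty_iff_false, not_false_iff, and_true] at hz
        have hz0 : z ≠ 0 := by rintro rfl; rw [norm_zero] at hz; linarith [hz.2]
        apply (hFinv_diff z hz0 hz.1.le).congr_of_eventuallyEq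
        have hU : IsOpen (Metric.ball (0:ℂ) r \ {0}) :=
          Metric.isOpen_ball.sdiff isClosed_singleton
        have hzU : z ∈ Metric.ball (0:ℂ) r \ {0} :=
          ⟨Metric.mem_ball.2 (by simpa using hz.1), by simpa using hz0⟩
        filter_upwards [hU.mem_nhds hzU] with v hv
        exact hFeq v (by simpa using hv.2) (le_of_lt (by simpa [Metric.mem_ball] using hv.1))
    have hFint : CircleIntegrable F 0 ρ := by
      refine (hFcont _ ?_).circleIntegrable hρ.le
      intro v hv
      have hvn : ‖v‖ = ρ := by simpa [mem_sphere_iff_norm] using hv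
      constructor
      · rintro rfl; rw [norm_zero] at hvn; exact (ne_of_gt hρ) hvn.symm
      · rw [hvn]; exact hρr.le
    -- the holomorphic Cauchy transform g
    set g : ℂ → (H →L[ℂ] H) := fun w => c • ∮ u in C(0, r), (u - w)⁻¹ • R u with hg
    have hganal : HasFPowerSeriesOnBall g (cauchyPowerSeries R 0 r.toNNReal) 0 r.toNNReal := by
      have hint : CircleIntegrable R 0 (r.toNNReal : ℝ) := by
        rwa [Real.coe_toNNReal r hr.le]
      have h := hasFPowerSeriesOn_cauchy_integral hint (by simpa using hr)
      simpa [hg, hc, Real.coe_toNNReal r hr.le] using h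
    have hgdiff : ∀ w : ℂ, ‖w‖ < r → DifferentiableAt ℂ g w := by
      intro w hw
      have hball : Metric.ball (0:ℂ) r ∈ nhds w :=
        Metric.isOpen_ball.mem_nhds (by simpa [Metric.mem_ball] using hw)
      have hdon : DifferentiableOn ℂ g (Metric.eball (0:ℂ) r.toNNReal) := hganal.differentiableOn
      rw [Metric.emetric_ball_nnreal, Real.coe_toNNReal r hr.le] at hdon
      exact hdon.differentiableAt hball
    -- pointwise resolvent identity
    have hres : ∀ v : ℂ, ‖v‖ = ρ → ∀ u : ℂ, ‖u‖ = r →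
        R v * W * R u = (u - v)⁻¹ • (R v - R u) := by
      intro v hv u hu
      have hv0 : v ≠ 0 := by rintro rfl; rw [norm_zero] at hv; exact (ne_of_gt hρ) hv.symm
      have hu0 : u ≠ 0 := by rintro rfl; rw [norm_zero] at hu; exact (ne_of_gt hr) hu.symm
      have huv : u - v ≠ 0 := by
        intro h
        rw [sub_eq_zero] at h
        rw [h, hv] at hu
        exact (ne_of_gt hρr) hu.symm
      have h1 := hR v hv0 (by rw [hv]; exact hρr.le)
      have h2 := hR u hu0 (le_of_eq hu)
      have hTsub : T u - T v = (u - v) • W := by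
        simp only [hT, sub_smul]; abel
      have hkey : R v - R u = (u - v) • (R v * W * R u) := by
        calc R v - R u = R v * (T u * R u) - (R v * T v) * R u := by
              rw [h2.1, h1.2, mul_one, one_mul]
          _ = R v * (T u - T v) * R u := by noncomm_ring
          _ = (u - v) • (R v * W * R u) := by
              rw [hTsub]; simp [smul_mul_assoc, mul_smul_comm]
      rw [hkey, smul_smul, inv_mul_cancel₀ huv, one_smul]
    have hK0 : laurentK R r 0 = c • ∮ u in C(0, r), R u := by
      unfold laurentK
      rw [← hc]
      congr 1
      exact circleIntegral.integral_congr hr.le fun u hu => by simp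
    -- step: R v * W * K₀ = R v - g v for ‖v‖ = ρ
    have hstep : ∀ v : ℂ, ‖v‖ = ρ → R v * W * laurentK R r 0 = R v - g v := by
      intro v hv
      have hvmem : v ∈ Metric.ball (0:ℂ) r := by
        rw [Metric.mem_ball, dist_zero_right, hv]; exact hρr
      have hvs : ∀ u : ℂ, u ∈ Metric.sphere (0:ℂ) r → u - v ≠ 0 := by
        intro u hu h
        rw [sub_eq_zero] at h
        have : ‖u‖ = r := by simpa [mem_sphere_iff_norm] using hu
        rw [h, hv] at this
        exact (ne_of_lt hρr) this
      have hint2 : CircleIntegrable (fun u => (u - v)⁻¹ • R u) 0 r := by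
        apply ContinuousOn.circleIntegrable hr.le
        apply ContinuousOn.smul (f := fun u : ℂ => (u - v)⁻¹) (g := R) _ (hRcont r hr le_rfl)
        exact ContinuousOn.inv₀ (continuousOn_id.sub continuousOn_const) hvs
      have hint3 : CircleIntegrable (fun u : ℂ => (u - v)⁻¹ • R v) 0 r := by
        apply ContinuousOn.circleIntegrable hr.le
        apply ContinuousOn.smul (f := fun u : ℂ => (u - v)⁻¹) (g := fun _ : ℂ => R v) _ continuousOn_const
        exact ContinuousOn.inv₀ (continuousOn_id.sub continuousOn_const) hvs
      rw [hK0, mul_smul_comm]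
      have hmul : R v * W * (∮ u in C(0, r), R u) = ∮ u in C(0, r), R v * W * R u :=
        (clm_circleIntegral_comm (ContinuousLinearMap.mul ℂ (H →L[ℂ] H) (R v * W)) hRint).symm
      rw [hmul]
      have hsplit : (∮ u in C(0, r), R v * W * R u)
          = (∮ u in C(0, r), (u - v)⁻¹ • R v) - ∮ u in C(0, r), (u - v)⁻¹ • R u := by
        rw [← circleIntegral.integral_sub hint3 hint2]
        apply circleIntegral.integral_congr hr.le
        intro u hu
        show R v * W * R u = (u - v)⁻¹ • R v - (u - v)⁻¹ • R u
        rw [hres v hv u (by simpa [mem_sphere_iff_norm] using hu), smul_sub]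
      rw [hsplit]
      have h4 : (∮ u in C(0, r), (u - v)⁻¹ • R v) = (2 * (Real.pi:ℂ) * Complex.I) • R v := by
        rw [circleIntegral.integral_smul_const, circleIntegral.integral_sub_inv_of_mem_ball hvmem]
      rw [h4, smul_sub, smul_smul, hc, inv_mul_cancel₀ hπ, one_smul, hg]
    -- vanishing of the holomorphic part
    have hzero : (∮ v in C(0, ρ), v ^ n • g v) = 0 := by
      apply circleIntegral_eq_zero_of_differentiable_on_off_countable hρ.le Set.countable_empty
      · intro v hv
        have hlt : ‖v‖ < r :=
          lt_of_le_of_lt (by simpa [Metric.mem_closedBall, dist_zero_right] using hv) hρr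
        exact (((differentiableAt_pow n).smul (hgdiff v hlt)).continuousAt).continuousWithinAt
      · intro z hz
        have hlt : ‖z‖ < r :=
          lt_trans (by simpa [Metric.mem_ball, dist_zero_right] using hz.1) hρr
        exact (differentiableAt_pow n).smul (hgdiff z hlt)
    -- description of K₋ₙ via the inner circle
    have hKk : laurentK R r (-(n:ℤ)) = c • ∮ v in C(0, ρ), F v := by
      unfold laurentK
      rw [← hc, ← hradius]
      congr 1
      apply circleIntegral.integral_congr hr.le
      intro v hv
      simp [hF, neg_neg, zpow_natCast]
    -- integrability of the remaining integrands on the inner circle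
    have hgint : CircleIntegrable (fun v => v ^ n • g v) 0 ρ := by
      apply ContinuousOn.circleIntegrable hρ.le
      intro v hv
      have hlt : ‖v‖ < r := by
        have : ‖v‖ = ρ := by simpa [mem_sphere_iff_norm] using hv
        rw [this]; exact hρr
      exact (((differentiableAt_pow n).smul (hgdiff v hlt)).continuousAt).continuousWithinAt
    -- assemble everything
    rw [hKk, smul_mul_assoc, smul_mul_assoc, mul_assoc]
    have hmul2 : (∮ v in C(0, ρ), F v) * (W * laurentK R r 0)
        = ∮ v in C(0, ρ), F v * (W * laurentK R r 0) :=
      (clm_circleIntegral_comm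
        ((ContinuousLinearMap.mul ℂ (H →L[ℂ] H)).flip (W * laurentK R r 0)) hFint).symm
    rw [hmul2]
    congr 1
    have hptwise : ∀ v ∈ Metric.sphere (0:ℂ) ρ,
        F v * (W * laurentK R r 0) = v ^ n • R v - v ^ n • g v := by
      intro v hv
      have hvn : ‖v‖ = ρ := by simpa [mem_sphere_iff_norm] using hv
      rw [hF]
      rw [smul_mul_assoc, ← mul_assoc, hstep v hvn, smul_sub]
    rw [circleIntegral.integral_congr hρ.le hptwise,
      circleIntegral.integral_sub hFint hgint, hzero, sub_zero]
  -- derive the range statements from `key`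
  have main : ∀ k : ℤ, 0 ≤ k →
      Set.range ⇑(laurentK R r (-k)) = Set.range ⇑(laurentK R r (-k) * W) := by
    intro k hk
    apply Set.Subset.antisymm
    · rintro y ⟨x, rfl⟩
      refine ⟨laurentK R r 0 x, ?_⟩
      conv_rhs => rw [← key k hk]
      rfl
    · rintro y ⟨x, rfl⟩
      exact ⟨W x, rfl⟩
  refine ⟨main, ?_⟩
  have h0 := main 0 le_rfl
  simpa using h0
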